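/- arXiv:2201.00490 — 2 statements merged into one kernel-verified Lean document; each statement's English description precedes it below -/
import Mathlib

section
/- Gumbel-Max trick (general case): let s₁,…,s_n ∈ ℝ and γ₁,…,γ_n be i.i.d. standard Gumbel random variables (γ_i = -log(-log U_i) with U_i i.i.d. Uniform(0,1)). Then for each k, P(argmax_i (s_i + γ_i) = k) = exp(s_k)/∑_{i=1}^n exp(s_i), and the argmax is almost surely unique. -/
open MeasureTheory ProbabilityTheory Finset



noncomputable section GumbelAux

/-- the inverse-CDF transform producing a standard Gumbel from a uniform. -/
def gumbelT (u : ℝ) : ℝ := -Real.log (-Real.log u)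

lemma gumbelT_measurable : Measurable gumbelT := by
  unfold gumbelT
  exact (Real.measurable_log.comp Real.measurable_log.neg).neg

/-- the standard Gumbel measure as pushforward of the uniform distribution on (0,1). -/
def gumbelMeasure : Measure ℝ :=
  (volume.restrict (Set.Ioo (0:ℝ) 1)).map gumbelT

lemma gumbelMeasure_Iic (x : ℝ) :
    gumbelMeasure (Set.Iic x) = ENNReal.ofReal (Real.exp (-Real.exp (-x))) := by
  rw [gumbelMeasure, Measure.map_apply gumbelT_measurable measurableSet_Iic,
    Measure.restrict_apply (gumbelT_measurable measurableSet_Iic)]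
  have hE0 : 0 < Real.exp (-Real.exp (-x)) := Real.exp_pos _
  have hE1 : Real.exp (-Real.exp (-x)) < 1 := by
    rw [Real.exp_lt_one_iff]
    simpa using Real.exp_pos (-x)
  have hset : gumbelT ⁻¹' Set.Iic x ∩ Set.Ioo 0 1
      = Set.Ioc 0 (Real.exp (-Real.exp (-x))) := by
    ext u
    simp only [Set.mem_inter_iff, Set.mem_preimage, Set.mem_Iic, Set.mem_Ioo, Set.mem_Ioc,
      gumbelT]
    constructor
    · rintro ⟨hTu, hu0, hu1⟩
      have hlogu : Real.log u < 0 := Real.log_neg hu0 hu1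
      have hpos : 0 < -Real.log u := by linarith
      have h1 : -x ≤ Real.log (-Real.log u) := by linarith
      have h2 : Real.exp (-x) ≤ -Real.log u := by
        rwa [Real.le_log_iff_exp_le hpos] at h1
      refine ⟨hu0, ?_⟩
      have : Real.log u ≤ -Real.exp (-x) := by linarith
      calc u = Real.exp (Real.log u) := (Real.exp_log hu0).symm
        _ ≤ Real.exp (-Real.exp (-x)) := Real.exp_le_exp.2 this
    · rintro ⟨hu0, hux⟩
      have hu1 : u < 1 := lt_of_le_of_lt hux hE1
      have hlogu : Real.log u ≤ -Real.exp (-x) := by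
        rw [← Real.log_exp (-Real.exp (-x))]
        exact Real.log_le_log hu0 hux
      have hpos : 0 < -Real.log u := by
        have := Real.exp_pos (-x); linarith
      have : Real.exp (-x) ≤ -Real.log u := by linarith
      have : Real.log (Real.exp (-x)) ≤ Real.log (-Real.log u) :=
        Real.log_le_log (Real.exp_pos _) this
      rw [Real.log_exp] at this
      exact ⟨by linarith, hu0, hu1⟩
  rw [hset, Real.volume_Ioc]
  simp

instance : IsProbabilityMeasure gumbelMeasure := by
  constructor
  rw [gumbelMeasure, Measure.map_apply gumbelT_measurable MeasurableSet.univ]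
  simp [Real.volume_Ioo]

lemma gumbelMeasure_singleton (v : ℝ) : gumbelMeasure {v} = 0 := by
  rw [gumbelMeasure, Measure.map_apply gumbelT_measurable (measurableSet_singleton v),
    Measure.restrict_apply (gumbelT_measurable (measurableSet_singleton v))]
  refine measure_mono_null (t := {Real.exp (-Real.exp (-v))}) ?_ (measure_singleton _)
  rintro u ⟨hTu, hu0, hu1⟩
  simp only [Set.mem_preimage, Set.mem_singleton_iff, gumbelT] at hTu ⊢
  have hlogu : Real.log u < 0 := Real.log_neg hu0 hu1
  have hpos : 0 < -Real.log u := by linarith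
  have h1 : Real.log (-Real.log u) = -v := by linarith
  have h2 : -Real.log u = Real.exp (-v) := by
    rw [← h1, Real.exp_log hpos]
  have h3 : Real.log u = -Real.exp (-v) := by linarith
  rw [← Real.exp_log hu0, h3]

lemma gumbelMeasure_Iio (x : ℝ) :
    gumbelMeasure (Set.Iio x) = ENNReal.ofReal (Real.exp (-Real.exp (-x))) := by
  have h : gumbelMeasure (Set.Iic x) = gumbelMeasure (Set.Iio x) + gumbelMeasure {x} := by
    rw [← measure_union (by simp) (measurableSet_singleton x), Set.Iio_union_right]
  rw [gumbelMeasure_singleton, add_zero] at h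
  rw [← h, gumbelMeasure_Iic]

/-- any probability measure with the Gumbel CDF is the Gumbel measure. -/
lemma eq_gumbelMeasure (ν : Measure ℝ) [IsProbabilityMeasure ν]
    (h : ∀ x, ν (Set.Iic x) = ENNReal.ofReal (Real.exp (-Real.exp (-x)))) :
    ν = gumbelMeasure := by
  refine Measure.ext_of_Iic ν gumbelMeasure fun x => ?_
  rw [h, gumbelMeasure_Iic]

end GumbelAux
open MeasureTheory ProbabilityTheory Finset

lemma lintegral_rpow_Ioo (c : ℝ) (hc : 0 ≤ c) :
    ∫⁻ u in Set.Ioo (0:ℝ) 1, ENNReal.ofReal (u ^ c) = ENNReal.ofReal (1 / (c + 1)) := by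
  have hint : IntervalIntegrable (fun u : ℝ => u ^ c) volume 0 1 :=
    intervalIntegral.intervalIntegrable_rpow' (by linarith)
  have hIoc : IntegrableOn (fun u : ℝ => u ^ c) (Set.Ioc 0 1) volume := by
    simpa [intervalIntegrable_iff, Set.uIoc_of_le (zero_le_one' ℝ)] using hint
  have hIoo : IntegrableOn (fun u : ℝ => u ^ c) (Set.Ioo 0 1) volume :=
    hIoc.mono_set Set.Ioo_subset_Ioc_self
  rw [← MeasureTheory.ofReal_integral_eq_lintegral_ofReal hIoo ?_]
  · congr 1
    rw [← MeasureTheory.integral_Ioc_eq_integral_Ioo, ← intervalIntegral.integral_of_le (zero_le_one' ℝ),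
      integral_rpow (Or.inl (by linarith))]
    rw [Real.one_rpow, Real.zero_rpow (by linarith)]
    ring
  · filter_upwards [ae_restrict_mem measurableSet_Ioo] with u hu
    exact Real.rpow_nonneg hu.1.le c

lemma gumbelT_exp_neg {u : ℝ} (hu : u ∈ Set.Ioo (0:ℝ) 1) :
    Real.exp (-gumbelT u) = -Real.log u := by
  have hlogu : Real.log u < 0 := Real.log_neg hu.1 hu.2
  rw [gumbelT, neg_neg, Real.exp_log (by linarith)]

lemma lintegral_gumbel (c : ℝ) (hc : 0 ≤ c) :
    ∫⁻ t, ENNReal.ofReal (Real.exp (-(c * Real.exp (-t)))) ∂gumbelMeasure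
      = ENNReal.ofReal (1 / (c + 1)) := by
  rw [gumbelMeasure, lintegral_map ?_ gumbelT_measurable]
  · rw [← lintegral_rpow_Ioo c hc]
    refine setLIntegral_congr_fun measurableSet_Ioo ?_
    intro u hu
    beta_reduce
    rw [gumbelT_exp_neg hu]
    congr 1
    rw [Real.rpow_def_of_pos hu.1]
    ring_nf
  · exact (ENNReal.measurable_ofReal.comp
      ((Real.measurable_exp.comp measurable_neg).const_mul c).neg.exp) |>.comp measurable_id
      |>.mono le_rfl le_rfl

lemma map_eval_pi_unique {ι : Type*} [Fintype ι] (i0 : ι) (h : ∀ i : ι, i = i0)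
    (ν : Measure ℝ) [IsProbabilityMeasure ν] :
    (Measure.pi fun _ : ι => ν).map (fun f => f i0) = ν := by
  refine Measure.ext fun A hA => ?_
  rw [Measure.map_apply (measurable_pi_apply i0) hA]
  have h1 : (fun f : ι → ℝ => f i0) ⁻¹' A = Set.pi Set.univ (fun _ => A) := by
    ext f
    simp only [Set.mem_preimage, Set.mem_pi, Set.mem_univ, forall_true_left]
    exact ⟨fun hf i => by rw [h i]; exact hf, fun hf => hf i0⟩
  rw [h1, Measure.pi_pi, Finset.prod_const, Finset.card_univ,
    Fintype.card_eq_one_iff.mpr ⟨i0, fun x => h x⟩, pow_one]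

lemma lintegral_eval_pi_unique {ι : Type*} [Fintype ι] (i0 : ι) (h : ∀ i : ι, i = i0)
    (ν : Measure ℝ) [IsProbabilityMeasure ν] (g : ℝ → ENNReal) (hg : Measurable g) :
    ∫⁻ f : ι → ℝ, g (f i0) ∂(Measure.pi fun _ : ι => ν) = ∫⁻ t, g t ∂ν := by
  conv_rhs => rw [← map_eval_pi_unique i0 h ν]
  exact (lintegral_map hg (measurable_pi_apply _)).symm

/-- Gumbel-Max trick, general case: with i.i.d. standard Gumbel noise γᵢ
(CDF exp(-exp(-x))), the index maximizing sᵢ + γᵢ follows the softmax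
distribution, and the argmax is almost surely unique. -/
theorem gumbel_max_general
    {Ω : Type*} [MeasurableSpace Ω] (P : Measure Ω) [IsProbabilityMeasure P]
    (n : ℕ) (hn : 0 < n) (s : Fin n → ℝ) (γ : Fin n → Ω → ℝ)
    (hmeas : ∀ i, Measurable (γ i))
    (hindep : iIndepFun γ P)
    (hgumbel : ∀ i x, Measure.map (γ i) P (Set.Iic x) =
      ENNReal.ofReal (Real.exp (-Real.exp (-x)))) :
    (∀ k, P {ω | ∀ i, i ≠ k → s i + γ i ω < s k + γ k ω} =
        ENNReal.ofReal (Real.exp (s k) / ∑ i, Real.exp (s i))) ∧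
    P {ω | ∃ i j, i ≠ j ∧ s i + γ i ω = s j + γ j ω} = 0 := by
  have hlaw : ∀ i, Measure.map (γ i) P = gumbelMeasure := fun i => by
    haveI : IsProbabilityMeasure (Measure.map (γ i) P) :=
      Measure.isProbabilityMeasure_map (hmeas i).aemeasurable
    exact eq_gumbelMeasure _ (hgumbel i)
  set Φ : Ω → (Fin n → ℝ) := fun ω i => γ i ω with hΦdef
  have hΦ : Measurable Φ := measurable_pi_lambda _ hmeas
  have hmap : Measure.map Φ P = Measure.pi (fun _ : Fin n => gumbelMeasure) := by
    refine (Measure.pi_eq (μ := fun _ : Fin n => gumbelMeasure) fun t ht => ?_).symm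
    rw [Measure.map_apply hΦ (MeasurableSet.univ_pi ht)]
    have hpre : Φ ⁻¹' Set.pi Set.univ t = ⋂ i, γ i ⁻¹' t i := by
      ext ω; simp [Set.mem_pi, hΦdef]
    rw [hpre, hindep.meas_iInter (fun i => ⟨t i, ht i, rfl⟩)]
    exact Finset.prod_congr rfl fun i _ => by
      rw [← hlaw i, Measure.map_apply (hmeas i) (ht i)]
  constructor
  · intro k
    classical
    set p : Fin n → Prop := fun i => i = k with hp
    set e := MeasurableEquiv.piEquivPiSubtypeProd (fun _ : Fin n => ℝ) p with he
    have hmp := measurePreserving_piEquivPiSubtypeProd (fun _ : Fin n => gumbelMeasure) p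
    set c : ℝ := ∑ j : {i : Fin n // ¬ p i}, Real.exp (s j.1 - s k) with hcdef
    have hc : 0 ≤ c := Finset.sum_nonneg fun j _ => (Real.exp_pos _).le
    set B : Set (({i : Fin n // p i} → ℝ) × ({i : Fin n // ¬ p i} → ℝ)) :=
      {q | ∀ i (h : ¬ p i), s i + q.2 ⟨i, h⟩ < s k + q.1 ⟨k, rfl⟩} with hBdef
    have hB : MeasurableSet B := by
      have : B = ⋂ i, ⋂ (h : ¬ p i),
          {q : ({i : Fin n // p i} → ℝ) × ({i : Fin n // ¬ p i} → ℝ) |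
            s i + q.2 ⟨i, h⟩ < s k + q.1 ⟨k, rfl⟩} := by
        ext q; simp [hBdef]
      rw [this]
      refine MeasurableSet.iInter fun i => MeasurableSet.iInter fun h => ?_
      exact measurableSet_lt (by fun_prop) (by fun_prop)
    have hev : {ω | ∀ i, i ≠ k → s i + γ i ω < s k + γ k ω} = Φ ⁻¹' (e ⁻¹' B) := rfl
    rw [hev, ← Set.preimage_comp]
    rw [show P ((e ∘ Φ) ⁻¹' B) = P (Φ ⁻¹' (e ⁻¹' B)) from rfl,
      ← Measure.map_apply hΦ (e.measurable hB), hmap,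
      hmp.measure_preimage_equiv]
    rw [Measure.prod_apply hB]
    have hslice : ∀ f : {i : Fin n // p i} → ℝ,
        (Measure.pi fun _ : {i : Fin n // ¬ p i} => gumbelMeasure) (Prod.mk f ⁻¹' B)
          = ENNReal.ofReal (Real.exp (-(c * Real.exp (-(f ⟨k, rfl⟩))))) := by
      intro f
      have h1 : Prod.mk f ⁻¹' B
          = Set.pi Set.univ (fun j : {i : Fin n // ¬ p i} =>
              Set.Iio (s k + f ⟨k, rfl⟩ - s j.1)) := by
        ext y
        simp only [Set.mem_preimage, Set.mem_pi, Set.mem_Iio, hBdef, Set.mem_setOf_eq,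
          Set.mem_univ, forall_true_left]
        constructor
        · intro H j
          have := H j.1 j.2
          linarith
        · intro H i h
          have := H ⟨i, h⟩
          linarith
      rw [h1, Measure.pi_pi]
      have h2 : ∀ j : {i : Fin n // ¬ p i},
          gumbelMeasure (Set.Iio (s k + f ⟨k, rfl⟩ - s j.1))
            = ENNReal.ofReal (Real.exp (-(Real.exp (s j.1 - s k) * Real.exp (-(f ⟨k, rfl⟩))))) := by
        intro j
        rw [gumbelMeasure_Iio]
        congr 2
        rw [← Real.exp_add]
        congr 1
        ring
      simp_rw [h2]
      rw [← ENNReal.ofReal_prod_of_nonneg (fun j _ => (Real.exp_pos _).le), ← Real.exp_sum]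
      congr 2
      rw [hcdef, Finset.sum_mul]
      exact Finset.sum_neg_distrib _
    simp_rw [hslice]
    have hfin := lintegral_eval_pi_unique (⟨k, rfl⟩ : {i : Fin n // p i})
      (fun x => Subtype.ext x.2) gumbelMeasure
      (fun t => ENNReal.ofReal (Real.exp (-(c * Real.exp (-t))))) (by fun_prop)
    beta_reduce at hfin
    have hgoal : ENNReal.ofReal (1 / (c + 1))
        = ENNReal.ofReal (Real.exp (s k) / ∑ i, Real.exp (s i)) := by
      congr 1
      have hsum : ∑ i, Real.exp (s i) = Real.exp (s k) * (1 + c) := by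
        have h3 : c = ∑ i ∈ Finset.univ.erase k, Real.exp (s i - s k) := by
          rw [hcdef]
          exact (Finset.sum_subtype (Finset.univ.erase k) (fun x => by simp [hp])
            (fun i => Real.exp (s i - s k))).symm
        have h4 : ∑ i, Real.exp (s i - s k) = Real.exp (s k - s k) + c := by
          rw [h3, ← Finset.sum_erase_add Finset.univ _ (Finset.mem_univ k), add_comm]
        have h5 : ∀ i, Real.exp (s i) = Real.exp (s k) * Real.exp (s i - s k) := fun i => by
          rw [← Real.exp_add]; ring_nf
        calc ∑ i, Real.exp (s i) = ∑ i, Real.exp (s k) * Real.exp (s i - s k) := by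
              exact Finset.sum_congr rfl fun i _ => h5 i
          _ = Real.exp (s k) * ∑ i, Real.exp (s i - s k) := by rw [Finset.mul_sum]
          _ = Real.exp (s k) * (1 + c) := by rw [h4, sub_self, Real.exp_zero]
      rw [hsum]
      rw [div_mul_eq_div_div, div_self (Real.exp_ne_zero _)]
      ring_nf
    convert hfin.trans ((lintegral_gumbel c hc).trans hgoal) using 3
  · have key : ∀ i j : Fin n, i ≠ j → P {ω | s i + γ i ω = s j + γ j ω} = 0 := by
      intro i j hij
      classical
      set p : Fin n → Prop := fun l => l = i with hp
      have hji : ¬ p j := fun h => hij h.symm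
      set e := MeasurableEquiv.piEquivPiSubtypeProd (fun _ : Fin n => ℝ) p with he
      have hmp := measurePreserving_piEquivPiSubtypeProd (fun _ : Fin n => gumbelMeasure) p
      set B : Set (({l : Fin n // p l} → ℝ) × ({l : Fin n // ¬ p l} → ℝ)) :=
        {q | s i + q.1 ⟨i, rfl⟩ = s j + q.2 ⟨j, hji⟩} with hBdef
      have hB : MeasurableSet B := measurableSet_eq_fun (by fun_prop) (by fun_prop)
      have hev : {ω | s i + γ i ω = s j + γ j ω} = Φ ⁻¹' (e ⁻¹' B) := rfl
      rw [hev, ← Measure.map_apply hΦ (e.measurable hB), hmap, hmp.measure_preimage_equiv]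
      rw [Measure.prod_apply hB]
      have hslice : ∀ f : {l : Fin n // p l} → ℝ,
          (Measure.pi fun _ : {l : Fin n // ¬ p l} => gumbelMeasure) (Prod.mk f ⁻¹' B) = 0 := by
        intro f
        have h1 : Prod.mk f ⁻¹' B
            = Function.eval (β := fun _ : {l : Fin n // ¬ p l} => ℝ) ⟨j, hji⟩ ⁻¹'
              ({s i + f ⟨i, rfl⟩ - s j} : Set ℝ) := by
          ext y
          simp only [Set.mem_preimage, hBdef, Set.mem_setOf_eq, Function.eval,
            Set.mem_singleton_iff]
          constructor <;> intro h <;> linarith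
        rw [h1]
        exact Measure.pi_eval_preimage_null _ (gumbelMeasure_singleton _)
      simp_rw [hslice]
      simp
    have hset : {ω | ∃ i j, i ≠ j ∧ s i + γ i ω = s j + γ j ω}
        = ⋃ i, ⋃ j, {ω | i ≠ j ∧ s i + γ i ω = s j + γ j ω} := by
      ext ω; simp [Set.mem_iUnion]
    rw [hset]
    refine measure_iUnion_null fun i => measure_iUnion_null fun j => ?_
    by_cases h : i = j
    · subst h; simp
    · have : {ω | i ≠ j ∧ s i + γ i ω = s j + γ j ω}
          = {ω | s i + γ i ω = s j + γ j ω} := by ext ω; simp [h]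
      rw [this]
      exact key i j h
end

section
/- sparsemax recovers argmax in the limit of large scores: for s ∈ ℝ^n with a unique maximal coordinate k, there exists T > 0 such that for all t ≥ T, sparsemax(t·s) = e_k, the k-th standard basis vector. -/
open Finset

/-- The probability simplex inside Euclidean space. -/
def esimplex (n : ℕ) : Set (EuclideanSpace ℝ (Fin n)) :=
  {z | (∀ i, 0 ≤ z i) ∧ ∑ i, z i = 1}

lemma einner_eq {n : ℕ} (z w : EuclideanSpace ℝ (Fin n)) :
    inner ℝ z w = ∑ i, z i * w i := by simp [PiLp.inner_apply, mul_comm]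

lemma enorm_sq {n : ℕ} (z : EuclideanSpace ℝ (Fin n)) : ‖z‖^2 = ∑ i, z i ^ 2 := by
  rw [EuclideanSpace.norm_eq, Real.sq_sqrt] <;> [simp [sq]; positivity]

lemma esingle_mem {n : ℕ} (k : Fin n) : (EuclideanSpace.single k (1:ℝ)) ∈ esimplex n := by
  constructor
  · intro i
    rw [EuclideanSpace.single_apply]
    split <;> norm_num
  · simp [EuclideanSpace.single_apply]

/-- sparsemax recovers argmax in the limit of large scores: if coordinate k of s
is the strict unique maximum, then for all sufficiently large t the (unique)
maximizer of z ↦ ⟨z, t•s⟩ - ½‖z‖² over the simplex is the one-hot vector eₖ. -/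
theorem sparsemax_recovers_argmax {n : ℕ} (s : EuclideanSpace ℝ (Fin n))
    (k : Fin n) (hk : ∀ i, i ≠ k → s i < s k) :
    ∃ T > (0:ℝ), ∀ t ≥ T, ∀ p ∈ esimplex n,
      (∀ z ∈ esimplex n,
        inner ℝ z (t • s) - (1/2) * ‖z‖^2 ≤ inner ℝ p (t • s) - (1/2) * ‖p‖^2 : Prop) →
      p = (EuclideanSpace.single k (1:ℝ)) := by
  classical
  set F : Finset (Fin n) := Finset.univ.erase k with hF
  by_cases hne : F.Nonempty
  · set δ := F.inf' hne (fun i => s k - s i) with hδ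
    have hδpos : 0 < δ := by
      rw [hδ, Finset.lt_inf'_iff]
      intro i hi
      have : i ≠ k := Finset.ne_of_mem_erase hi
      linarith [hk i this]
    refine ⟨2/δ, by positivity, ?_⟩
    intro t ht p hp hmax
    have htδ : 2 ≤ t * δ := by
      rw [ge_iff_le, div_le_iff₀ hδpos] at ht; linarith
    obtain ⟨hpos, hsum⟩ := hp
    have hkey := hmax _ (esingle_mem k)
    rw [einner_eq, einner_eq, enorm_sq, enorm_sq] at hkey
    have hsplit : ∀ g : Fin n → ℝ, ∑ i, g i = g k + ∑ i ∈ F, g i := by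
      intro g
      rw [hF, Finset.add_sum_erase _ g (Finset.mem_univ k)]
    -- simplify the e_k side
    have h1 : ∑ i, EuclideanSpace.single k (1:ℝ) i * (t • s) i = t * s k := by
      simp [EuclideanSpace.single_apply, ite_mul, PiLp.smul_apply, smul_eq_mul]
    have h2 : ∑ i, (EuclideanSpace.single k (1:ℝ)) i ^ 2 = 1 := by
      simp [EuclideanSpace.single_apply, ite_pow]
    rw [h1, h2] at hkey
    set m := ∑ i ∈ F, p i with hm
    have hmnn : 0 ≤ m := Finset.sum_nonneg fun i _ => hpos i
    have hpk : p k = 1 - m := by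
      have := hsplit p
      rw [hsum] at this; linarith
    -- bound the p side
    have hinner : ∑ i, p i * (t • s) i ≤ t * (s k - δ * m) := by
      have : ∀ i ∈ F, p i * s i ≤ p i * (s k - δ) := by
        intro i hi
        have hd : δ ≤ s k - s i := Finset.inf'_le _ hi
        nlinarith [hpos i]
      have hsum2 : ∑ i ∈ F, p i * s i ≤ ∑ i ∈ F, p i * (s k - δ) :=
        Finset.sum_le_sum this
      rw [Finset.sum_congr rfl (fun i _ => by
        simp [PiLp.smul_apply, smul_eq_mul]; ring :
        ∀ i ∈ Finset.univ, p i * (t • s) i = t * (p i * s i))]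
      rw [← Finset.mul_sum, hsplit (fun i => p i * s i)]
      have ht0 : 0 < t := lt_of_lt_of_le (by positivity) ht
      have : p k * s k + ∑ i ∈ F, p i * s i ≤ s k - δ * m := by
        rw [← hm] at *
        calc p k * s k + ∑ i ∈ F, p i * s i
            ≤ p k * s k + ∑ i ∈ F, p i * (s k - δ) := by linarith
          _ = p k * s k + m * (s k - δ) := by
              rw [show m = ∑ i ∈ F, p i from rfl, Finset.sum_mul]
          _ = s k - δ * m := by rw [hpk]; ring
      nlinarith
    have hnormp : (1 - m)^2 ≤ ∑ i, p i ^ 2 := by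
      rw [← hpk]
      exact Finset.single_le_sum (f := fun i => p i ^ 2)
        (fun i _ => sq_nonneg _) (Finset.mem_univ k)
    -- combine
    have hm0 : m = 0 := by nlinarith
    -- conclude p = e_k
    have hFz : ∀ i ∈ F, p i = 0 := by
      rw [hm] at hm0
      exact (Finset.sum_eq_zero_iff_of_nonneg (fun i _ => hpos i)).mp hm0
    ext i
    rw [EuclideanSpace.single_apply]
    by_cases hik : i = k
    · subst hik; simp [hpk, hm0]
    · simp [hik, hFz i (Finset.mem_erase.mpr ⟨hik, Finset.mem_univ i⟩)]
  · -- F empty: univ = {k}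
    refine ⟨1, one_pos, ?_⟩
    intro t _ p hp _
    rw [Finset.not_nonempty_iff_eq_empty] at hne
    have huniv : (Finset.univ : Finset (Fin n)) = {k} := by
      apply Finset.eq_of_subset_of_card_le
      · intro i _
        simp only [Finset.mem_singleton]
        by_contra hik
        have : i ∈ F := Finset.mem_erase.mpr ⟨hik, Finset.mem_univ i⟩
        rw [hne] at this; exact absurd this (Finset.notMem_empty i)
      · have := k.2
        simp only [Finset.card_singleton, Finset.card_univ, Fintype.card_fin]
        omega
    obtain ⟨_, hsum⟩ := hp
    rw [huniv, Finset.sum_singleton] at hsum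
    ext i
    have hik : i = k := by
      have := Finset.mem_univ i; rw [huniv, Finset.mem_singleton] at this; exact this
    subst hik
    rw [EuclideanSpace.single_apply, if_pos rfl, hsum]
end
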